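/- arXiv:1107.2306 — 3 statements merged into one kernel-verified Lean document; each statement's English description precedes it below -/
import Mathlib

section
/- Let m ≥ 1, and for x ∈ ℝ^{2m} set s(x) = √(x₁² + ⋯ + x_m²) and t(x) = √(x_{m+1}² + ⋯ + x_{2m}²). Define the Simons cone 𝒞 = {x ∈ ℝ^{2m} : s(x) = t(x)}. Then for every x ∈ ℝ^{2m}, the Euclidean distance from x to 𝒞 equals |s(x) − t(x)|/√2. -/
open Metric

lemma exists_same_dir {E : Type*} [NormedAddCommGroup E] [NormedSpace ℝ E]
    (a e : E) (he : ‖e‖ = 1) (r : ℝ) (hr : 0 ≤ r) :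
    ∃ c : E, ‖c‖ = r ∧ ‖a - c‖ = |‖a‖ - r| := by
  rcases eq_or_ne a 0 with h | h
  · refine ⟨r • e, ?_, ?_⟩
    · simp [norm_smul, he, abs_of_nonneg hr]
    · simp [h, norm_smul, he, abs_of_nonneg hr, abs_of_nonpos (neg_nonpos.mpr hr)]
  · refine ⟨(r / ‖a‖) • a, ?_, ?_⟩
    · rw [norm_smul, Real.norm_eq_abs, abs_div, abs_of_nonneg hr, abs_of_nonneg (norm_nonneg a),
        div_mul_cancel₀ _ (norm_ne_zero_iff.mpr h)]
    · have : a - (r / ‖a‖) • a = (1 - r / ‖a‖) • a := by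
        rw [sub_smul, one_smul]
      rw [this, norm_smul, Real.norm_eq_abs]
      have hne : ‖a‖ ≠ 0 := norm_ne_zero_iff.mpr h
      rw [show (1 : ℝ) - r / ‖a‖ = (‖a‖ - r) / ‖a‖ by field_simp, abs_div,
        abs_of_nonneg (norm_nonneg a), div_mul_cancel₀ _ hne]

/-- The distance from a point of `ℝ^{2m} = ℝ^m × ℝ^m` (with the Euclidean, i.e. `L²`, norm)
to the Simons cone `{s = t}` equals `|s - t| / √2`, where `s, t` are the norms of the
first and last `m` coordinates. -/
theorem stmt_3 (m : ℕ) (hm : 1 ≤ m)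
    (C : Set (WithLp 2 (EuclideanSpace ℝ (Fin m) × EuclideanSpace ℝ (Fin m))))
    (hC : C = {x | ‖(WithLp.equiv 2 _ x).1‖ = ‖(WithLp.equiv 2 _ x).2‖}) :
    ∀ x : WithLp 2 (EuclideanSpace ℝ (Fin m) × EuclideanSpace ℝ (Fin m)),
      Metric.infDist x C =
        |‖(WithLp.equiv 2 _ x).1‖ - ‖(WithLp.equiv 2 _ x).2‖| / Real.sqrt 2 := by
  intro x
  set a := (WithLp.equiv 2 _ x).1 with ha
  set b := (WithLp.equiv 2 _ x).2 with hb
  set s := ‖a‖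
  set t := ‖b‖
  have hs : 0 ≤ s := norm_nonneg a
  have ht : 0 ≤ t := norm_nonneg b
  have hCne : C.Nonempty := ⟨0, by simp [hC]⟩
  have key : |s - t| / Real.sqrt 2 = Real.sqrt ((s - t) ^ 2 / 2) := by
    rw [Real.sqrt_div' _ (by norm_num), Real.sqrt_sq_eq_abs]
  refine le_antisymm ?_ ?_
  · -- upper bound: exhibit a point of C at the right distance
    set r := (s + t) / 2 with hr
    have hr0 : 0 ≤ r := by positivity
    have he : ‖(EuclideanSpace.single (⟨0, hm⟩ : Fin m) (1 : ℝ))‖ = 1 := by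
      simp [EuclideanSpace.norm_single]
    obtain ⟨c, hc, hac⟩ := exists_same_dir a _ he r hr0
    obtain ⟨d, hd, hbd⟩ := exists_same_dir b _ he r hr0
    set y : WithLp 2 (EuclideanSpace ℝ (Fin m) × EuclideanSpace ℝ (Fin m)) :=
      (WithLp.equiv 2 _).symm (c, d) with hy
    have hyC : y ∈ C := by
      simp [hC, hy, hc, hd]
    have hdist : dist x y = |s - t| / Real.sqrt 2 := by
      rw [WithLp.prod_dist_eq_of_L2]
      have h1 : dist x.fst y.fst = |s - t| / 2 := by
        have hfst : x.fst - y.fst = a - c := rfl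
        rw [dist_eq_norm, hfst, hac, hr, show ‖a‖ - (s + t) / 2 = (s - t) / 2 by
          show ‖a‖ - (‖a‖ + t) / 2 = (‖a‖ - t) / 2; ring]
        rw [abs_div, abs_of_nonneg (by norm_num : (0:ℝ) ≤ 2)]
      have h2 : dist x.snd y.snd = |s - t| / 2 := by
        have hsnd : x.snd - y.snd = b - d := rfl
        rw [dist_eq_norm, hsnd, hbd, hr, show ‖b‖ - (s + t) / 2 = -((s - t) / 2) by
          show ‖b‖ - (s + ‖b‖) / 2 = -((s - ‖b‖) / 2); ring]
        rw [abs_neg, abs_div, abs_of_nonneg (by norm_num : (0:ℝ) ≤ 2)]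
      rw [h1, h2, key]
      congr 1
      rw [div_pow, sq_abs]
      ring
    calc Metric.infDist x C ≤ dist x y := Metric.infDist_le_dist_of_mem hyC
    _ = _ := hdist
  · -- lower bound
    rw [← not_lt]
    intro hlt
    rw [Metric.infDist_lt_iff hCne] at hlt
    obtain ⟨y, hyC, hlt⟩ := hlt
    refine absurd hlt (not_lt.mpr ?_)
    rw [hC] at hyC
    set r := ‖(WithLp.equiv 2 _ y).1‖ with hrdef
    have hy2 : ‖(WithLp.equiv 2 _ y).2‖ = r := hyC.symm
    have h1 : |s - r| ≤ dist x.fst y.fst := by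
      rw [dist_eq_norm]; exact abs_norm_sub_norm_le _ _
    have h2 : |t - r| ≤ dist x.snd y.snd := by
      rw [dist_eq_norm, ← hy2]
      exact abs_norm_sub_norm_le _ _
    rw [WithLp.prod_dist_eq_of_L2, key]
    apply Real.sqrt_le_sqrt
    have e1 : (s - r) ^ 2 ≤ dist x.fst y.fst ^ 2 := by
      rw [← sq_abs (s - r)]
      exact pow_le_pow_left₀ (abs_nonneg _) h1 2
    have e2 : (t - r) ^ 2 ≤ dist x.snd y.snd ^ 2 := by
      rw [← sq_abs (t - r)]
      exact pow_le_pow_left₀ (abs_nonneg _) h2 2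
    nlinarith [sq_nonneg (s + t - 2 * r)]
end

section
/- The function v₀(x,λ) = (2/π) arctan(x/(λ + 1/π)) is harmonic in the upper half-plane ℝ²₊ = {(x,λ) : λ > 0}, satisfies −∂_λ v₀(x,0) = sin(π v₀(x,0)) for all x ∈ ℝ, is strictly increasing in x, and has limits ±1 as x → ±∞ (for each fixed λ ≥ 0). -/
open Filter

/-- Derivative in x. -/
lemma stmt5_aux_x {c : ℝ} (hc : c ≠ 0) (y : ℝ) :
    HasDerivAt (fun x' : ℝ => 2 / Real.pi * Real.arctan (x' / c))
      (2 / Real.pi * (c / (c ^ 2 + y ^ 2))) y := by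
  have h1 : HasDerivAt (fun x' : ℝ => x' / c) (1 / c) y := (hasDerivAt_id y).div_const c
  have h2 := ((Real.hasDerivAt_arctan (y / c)).comp y h1).const_mul (2 / Real.pi)
  refine h2.congr_deriv ?_
  have h3 : (1 : ℝ) + (y / c) ^ 2 ≠ 0 := by positivity
  field_simp

/-- Derivative in l. -/
lemma stmt5_aux_l (x : ℝ) {m : ℝ} (hm : m + 1 / Real.pi ≠ 0) :
    HasDerivAt (fun l' : ℝ => 2 / Real.pi * Real.arctan (x / (l' + 1 / Real.pi)))
      (2 / Real.pi * (-x / ((m + 1 / Real.pi) ^ 2 + x ^ 2))) m := by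
  have hd : HasDerivAt (fun l' : ℝ => l' + 1 / Real.pi) 1 m := (hasDerivAt_id m).add_const _
  have h1 : HasDerivAt (fun l' : ℝ => x / (l' + 1 / Real.pi))
      (-x / (m + 1 / Real.pi) ^ 2) m := by
    have := (hasDerivAt_const m x).div hd hm
    refine this.congr_deriv ?_
    field_simp
    ring
  have h2 := ((Real.hasDerivAt_arctan (x / (m + 1 / Real.pi))).comp m h1).const_mul (2 / Real.pi)
  set c := m + 1 / Real.pi with hcs
  refine h2.congr_deriv ?_
  have h4 : c ^ 2 + x ^ 2 ≠ 0 := by positivity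
  field_simp

/-- The explicit layer solution of the Peierls–Nabarro problem:
`v₀(x,λ) = (2/π) arctan(x/(λ + 1/π))` is harmonic in the upper half-plane, satisfies
the Neumann condition `-∂_λ v₀(x,0) = sin(π v₀(x,0))`, is strictly increasing in `x`,
and tends to `±1` as `x → ±∞` for each fixed `λ ≥ 0`. -/
theorem stmt_5 (v : ℝ → ℝ → ℝ)
    (hv : ∀ x l : ℝ, v x l = (2 / Real.pi) * Real.arctan (x / (l + 1 / Real.pi))) :
    (∀ x l : ℝ, 0 < l →
      deriv (deriv (fun x' => v x' l)) x + deriv (deriv (fun l' => v x l')) l = 0) ∧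
    (∀ x : ℝ, -(deriv (fun l' => v x l') 0) = Real.sin (Real.pi * v x 0)) ∧
    (∀ l : ℝ, 0 ≤ l → StrictMono (fun x => v x l)) ∧
    (∀ l : ℝ, 0 ≤ l →
      Tendsto (fun x => v x l) atTop (nhds 1) ∧
      Tendsto (fun x => v x l) atBot (nhds (-1))) := by
  have hpi : (0 : ℝ) < Real.pi := Real.pi_pos
  refine ⟨?_, ?_, ?_, ?_⟩
  · -- harmonicity
    intro x l hl
    set c : ℝ := l + 1 / Real.pi with hcdef
    have hcpos : 0 < c := by positivity
    have hc0 : c ≠ 0 := hcpos.ne'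
    have hden : c ^ 2 + x ^ 2 ≠ 0 := by positivity
    -- x direction
    have hfx : (fun x' => v x' l) = fun x' => 2 / Real.pi * Real.arctan (x' / c) := by
      funext x'; rw [hv]
    have hdx : deriv (fun x' => v x' l)
        = fun y => 2 / Real.pi * c * (c ^ 2 + y ^ 2)⁻¹ := by
      funext y
      rw [hfx, (stmt5_aux_x hc0 y).deriv]
      ring
    have hbase : HasDerivAt (fun y : ℝ => c ^ 2 + y ^ 2) (2 * x) x := by
      simpa using ((hasDerivAt_pow 2 x).const_add (c ^ 2))
    have hdxx : HasDerivAt (fun y : ℝ => 2 / Real.pi * c * (c ^ 2 + y ^ 2)⁻¹)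
        (2 / Real.pi * c * (-(2 * x) / (c ^ 2 + x ^ 2) ^ 2)) x := by
      have := (hbase.inv hden).const_mul (2 / Real.pi * c)
      exact this
    -- l direction
    have hfl : (fun l' => v x l')
        = fun l' => 2 / Real.pi * Real.arctan (x / (l' + 1 / Real.pi)) := by
      funext l'; rw [hv]
    have hev : ∀ᶠ m in nhds l, m + 1 / Real.pi ≠ 0 := by
      have ht : Continuous fun m : ℝ => m + 1 / Real.pi := by continuity
      exact (ht.tendsto l).eventually_ne hc0
    have hevd : deriv (fun l' => v x l')
        =ᶠ[nhds l] fun m => 2 / Real.pi * (-x) * ((m + 1 / Real.pi) ^ 2 + x ^ 2)⁻¹ := by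
      filter_upwards [hev] with m hm
      rw [hfl, (stmt5_aux_l x hm).deriv]
      ring
    have hbase2 : HasDerivAt (fun m : ℝ => (m + 1 / Real.pi) ^ 2 + x ^ 2) (2 * c) l := by
      have := (((hasDerivAt_id l).add_const (1 / Real.pi)).pow 2).add_const (x ^ 2)
      refine this.congr_deriv ?_
      simp [hcdef]
    have hdll : HasDerivAt (fun m : ℝ => 2 / Real.pi * (-x) * ((m + 1 / Real.pi) ^ 2 + x ^ 2)⁻¹)
        (2 / Real.pi * (-x) * (-(2 * c) / (c ^ 2 + x ^ 2) ^ 2)) l := by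
      have hden2 : (l + 1 / Real.pi) ^ 2 + x ^ 2 ≠ 0 := by rw [← hcdef]; exact hden
      have := (hbase2.inv hden2).const_mul (2 / Real.pi * (-x))
      rw [← hcdef] at this
      exact this
    rw [hdx, hdxx.deriv, hevd.deriv_eq, hdll.deriv]
    field_simp
    ring
  · -- Neumann condition
    intro x
    have hm0 : (0 : ℝ) + 1 / Real.pi ≠ 0 := by positivity
    have hfl : (fun l' => v x l')
        = fun l' => 2 / Real.pi * Real.arctan (x / (l' + 1 / Real.pi)) := by
      funext l'; rw [hv]
    rw [hfl, (stmt5_aux_l x hm0).deriv, hv]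
    have hx0 : x / (0 + 1 / Real.pi) = Real.pi * x := by
      field_simp
      ring
    rw [hx0]
    have hval : Real.pi * (2 / Real.pi * Real.arctan (Real.pi * x))
        = 2 * Real.arctan (Real.pi * x) := by
      field_simp
    rw [hval, Real.sin_two_mul, Real.sin_arctan, Real.cos_arctan]
    have hs : Real.sqrt (1 + (Real.pi * x) ^ 2) * Real.sqrt (1 + (Real.pi * x) ^ 2)
        = 1 + (Real.pi * x) ^ 2 := Real.mul_self_sqrt (by positivity)
    have hs0 : Real.sqrt (1 + (Real.pi * x) ^ 2) ≠ 0 := by positivity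
    have h1 : (1 : ℝ) + (Real.pi * x) ^ 2 ≠ 0 := by positivity
    have h2 : ((0 : ℝ) + 1 / Real.pi) ^ 2 + x ^ 2 ≠ 0 := by positivity
    field_simp
    rw [Real.sq_sqrt (by positivity)]
    ring
  · -- strict monotonicity
    intro l hl a b hab
    have hcpos : 0 < l + 1 / Real.pi := by positivity
    simp only [hv]
    have h1 : a / (l + 1 / Real.pi) < b / (l + 1 / Real.pi) := by gcongr
    have h2 : (0 : ℝ) < 2 / Real.pi := by positivity
    exact mul_lt_mul_of_pos_left (Real.arctan_strictMono h1) h2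
  · -- limits
    intro l hl
    have hcpos : 0 < l + 1 / Real.pi := by positivity
    have hfun : (fun x => v x l)
        = fun x => 2 / Real.pi * Real.arctan (x / (l + 1 / Real.pi)) := by
      funext x; rw [hv]
    have hone : 2 / Real.pi * (Real.pi / 2) = 1 := by field_simp
    constructor
    · have h1 : Tendsto (fun x : ℝ => x / (l + 1 / Real.pi)) atTop atTop :=
        tendsto_id.atTop_div_const hcpos
      have h2 := ((Real.tendsto_arctan_atTop.mono_right nhdsWithin_le_nhds).comp h1).const_mul
        (2 / Real.pi)
      rw [hfun]
      rw [hone] at h2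
      exact h2
    · have h1 : Tendsto (fun x : ℝ => x / (l + 1 / Real.pi)) atBot atBot :=
        tendsto_id.atBot_div_const hcpos
      have h2 := ((Real.tendsto_arctan_atBot.mono_right nhdsWithin_le_nhds).comp h1).const_mul
        (2 / Real.pi)
      rw [hfun]
      have hneg : 2 / Real.pi * -(Real.pi / 2) = -1 := by
        field_simp
      rw [hneg] at h2
      exact h2
end

section
/- Let H ⊂ ℝⁿ be a bounded domain and Ω = H × (0,∞). Let v ∈ C²(Ω) ∩ C(closure(Ω)) be bounded and harmonic in Ω. Then inf_Ω v = inf_{∂Ω} v. -/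
open Real Set Filter Topology

/-- Second derivative test: at a local minimum, the second derivative is nonnegative. -/
lemma oneDim_second_test {g g' : ℝ → ℝ} {c : ℝ}
    (hg : ∀ᶠ t in 𝓝 (0:ℝ), HasDerivAt g (g' t) t)
    (hg' : HasDerivAt g' c 0)
    (hmin : IsLocalMin g 0) : 0 ≤ c := by
  by_contra hc
  push_neg at hc
  have h0 : g' 0 = 0 := hmin.hasDerivAt_eq_zero hg.self_of_nhds
  have hslope : Tendsto (slope g' 0) (𝓝[≠] (0:ℝ)) (𝓝 c) :=
    hasDerivAt_iff_tendsto_slope.mp hg'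
  have hev : ∀ᶠ t in 𝓝[>] (0:ℝ), slope g' 0 t < 0 := by
    have : ∀ᶠ t in 𝓝[≠] (0:ℝ), slope g' 0 t < 0 :=
      hslope.eventually (Iio_mem_nhds hc)
    exact this.filter_mono (nhdsWithin_mono _ (fun x hx => ne_of_gt hx))
  obtain ⟨u, hu, hsub⟩ := mem_nhdsGT_iff_exists_Ioo_subset.mp hev
  obtain ⟨r, hr0, hr⟩ := Metric.eventually_nhds_iff.mp (hg.and hmin)
  set t0 : ℝ := min (r/2) (u/2) with ht0def
  have hu0 : (0:ℝ) < u := hu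
  have ht0 : 0 < t0 := lt_min (by linarith) (by linarith)
  have ht0r : t0 < r := lt_of_le_of_lt (min_le_left _ _) (by linarith)
  have ht0u : t0 < u := lt_of_le_of_lt (min_le_right _ _) (by linarith)
  have hder : ∀ s ∈ Ioo (0:ℝ) t0, HasDerivAt g (g' s) s := by
    intro s hs
    exact (hr (show dist s 0 < r by
      rw [Real.dist_eq, sub_zero, abs_of_pos hs.1]; linarith [hs.2])).1
  have hcont : ContinuousOn g (Icc 0 t0) := by
    intro s hs
    have : dist s 0 < r := by
      rw [Real.dist_eq, sub_zero, abs_of_nonneg hs.1]; linarith [hs.2]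
    exact ((hr this).1.differentiableAt.continuousAt).continuousWithinAt
  obtain ⟨ξ, hξ, hξ'⟩ := exists_hasDerivAt_eq_slope g g' ht0 hcont hder
  -- g' ξ < 0 since slope g' 0 ξ < 0 and ξ > 0
  have hsl : slope g' 0 ξ < 0 := hsub ⟨hξ.1, lt_trans hξ.2 ht0u⟩
  have hgξ : g' ξ < 0 := by
    rw [slope_def_field, h0, sub_zero, sub_zero] at hsl
    by_contra h
    exact absurd hsl (not_lt.mpr (div_nonneg (not_lt.mp h) hξ.1.le))
  -- but g t0 ≥ g 0
  have hgt0 : g 0 ≤ g t0 := (hr (show dist t0 0 < r by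
    rw [Real.dist_eq, sub_zero, abs_of_pos ht0]; exact ht0r)).2
  rw [hξ'] at hgξ
  exact absurd hgξ (not_lt.mpr (div_nonneg (sub_nonneg.mpr hgt0) (by linarith)))

/-- Second derivative of `v : ℝⁿ × ℝ → ℝ` in the direction `d`. -/
noncomputable def secondDirDeriv (n : ℕ)
    (v : EuclideanSpace ℝ (Fin n) × ℝ → ℝ) (p d : EuclideanSpace ℝ (Fin n) × ℝ) : ℝ :=
  fderiv ℝ (fun q => fderiv ℝ v q d) p d

/-- Laplacian of `v : ℝⁿ × ℝ → ℝ` (coordinates `(x, λ)`). -/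
noncomputable def cylLaplacian (n : ℕ)
    (v : EuclideanSpace ℝ (Fin n) × ℝ → ℝ) (p : EuclideanSpace ℝ (Fin n) × ℝ) : ℝ :=
  (∑ i : Fin n, secondDirDeriv n v p (EuclideanSpace.single i 1, 0)) +
    secondDirDeriv n v p (0, 1)

/-- At an interior local minimum, every pure second directional derivative is `≥ 0`. -/
lemma secondDirDeriv_nonneg_of_isLocalMin {n : ℕ}
    {w : EuclideanSpace ℝ (Fin n) × ℝ → ℝ}
    {U : Set (EuclideanSpace ℝ (Fin n) × ℝ)} (hU : IsOpen U)
    {p : EuclideanSpace ℝ (Fin n) × ℝ} (hp : p ∈ U)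
    (hdiff : ∀ q ∈ U, DifferentiableAt ℝ w q)
    (d : EuclideanSpace ℝ (Fin n) × ℝ)
    (hF : DifferentiableAt ℝ (fun q => fderiv ℝ w q d) p)
    (hmin : IsLocalMin w p) : 0 ≤ secondDirDeriv n w p d := by
  set A : ℝ → EuclideanSpace ℝ (Fin n) × ℝ := fun t => p + t • d with hA
  have hA0 : A 0 = p := by simp [hA]
  have hAder : ∀ t, HasDerivAt A d t := by
    intro t
    have h1 : HasDerivAt (fun t : ℝ => t • d) ((1:ℝ) • d) t :=
      (hasDerivAt_id t).smul_const d
    simpa [hA, one_smul] using h1.const_add p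
  have hAcont : ContinuousAt A 0 := (hAder 0).continuousAt
  have hevU : ∀ᶠ t in 𝓝 (0:ℝ), A t ∈ U := by
    have : Tendsto A (𝓝 0) (𝓝 p) := hA0 ▸ hAcont
    exact this.eventually (hU.mem_nhds hp)
  have hg : ∀ᶠ t in 𝓝 (0:ℝ), HasDerivAt (fun s => w (A s)) (fderiv ℝ w (A t) d) t := by
    filter_upwards [hevU] with t ht
    exact ((hdiff _ ht).hasFDerivAt.comp_hasDerivAt t (hAder t))
  have hg' : HasDerivAt (fun t => fderiv ℝ w (A t) d) (secondDirDeriv n w p d) 0 := by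
    have hF' : HasFDerivAt (fun q => (fderiv ℝ w q) d)
        (fderiv ℝ (fun q => (fderiv ℝ w q) d) p) (A 0) := hA0 ▸ hF.hasFDerivAt
    exact hF'.comp_hasDerivAt 0 (hAder 0)
  have hminA : IsLocalMin (fun t => w (A t)) 0 := by
    have : ∀ᶠ t in 𝓝 (0:ℝ), w p ≤ w (A t) :=
      (hA0 ▸ hAcont : Tendsto A (𝓝 0) (𝓝 p)).eventually hmin
    simpa [IsLocalMin, IsMinFilter, hA0] using this
  exact oneDim_second_test hg hg' hminA

/-- `q ↦ f q.2` has an explicit Fréchet derivative. -/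
lemma slice_hasFDerivAt {f f' : ℝ → ℝ} (hf : ∀ t, HasDerivAt f (f' t) t)
    {n : ℕ} (q : EuclideanSpace ℝ (Fin n) × ℝ) :
    HasFDerivAt (fun q : EuclideanSpace ℝ (Fin n) × ℝ => f q.2)
      (f' q.2 • ContinuousLinearMap.snd ℝ (EuclideanSpace ℝ (Fin n)) ℝ) q :=
  (hf q.2).comp_hasFDerivAt q hasFDerivAt_snd

/-- Second directional derivative of `v + f ∘ snd` at interior points. -/
lemma slice_add_second {n : ℕ} {v : EuclideanSpace ℝ (Fin n) × ℝ → ℝ}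
    {f f' f'' : ℝ → ℝ}
    (hf : ∀ t, HasDerivAt f (f' t) t) (hf' : ∀ t, HasDerivAt f' (f'' t) t)
    {U : Set (EuclideanSpace ℝ (Fin n) × ℝ)} (hU : IsOpen U)
    (hv : ContDiffOn ℝ 2 v U)
    {p : EuclideanSpace ℝ (Fin n) × ℝ} (hp : p ∈ U)
    (d : EuclideanSpace ℝ (Fin n) × ℝ) :
    DifferentiableAt ℝ (fun q => fderiv ℝ (fun q => v q + f q.2) q d) p ∧
      secondDirDeriv n (fun q => v q + f q.2) p d
        = secondDirDeriv n v p d + f'' p.2 * d.2 * d.2 := by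
  have hvAt : ∀ q ∈ U, DifferentiableAt ℝ v q := fun q hq =>
    (hv.contDiffAt (hU.mem_nhds hq)).differentiableAt (by norm_num)
  have heq : (fun q => fderiv ℝ (fun q => v q + f q.2) q d)
      =ᶠ[𝓝 p] fun q => fderiv ℝ v q d + f' q.2 * d.2 := by
    filter_upwards [hU.mem_nhds hp] with q hq
    rw [(show HasFDerivAt (fun q => v q + f q.2) _ q from
      (hvAt q hq).hasFDerivAt.add (slice_hasFDerivAt hf q)).fderiv]
    simp
  have hA : DifferentiableAt ℝ (fun q => fderiv ℝ v q d) p := by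
    have h1 : ContDiffAt ℝ 1 (fderiv ℝ v) p :=
      (hv.contDiffAt (hU.mem_nhds hp)).fderiv_right (by norm_num)
    exact (h1.differentiableAt one_ne_zero).clm_apply (differentiableAt_const d)
  have hB : HasFDerivAt (fun q : EuclideanSpace ℝ (Fin n) × ℝ => f' q.2 * d.2)
      ((f'' p.2 * d.2) • ContinuousLinearMap.snd ℝ (EuclideanSpace ℝ (Fin n)) ℝ) p :=
    slice_hasFDerivAt (fun t => (hf' t).mul_const d.2) p
  constructor
  · exact (hA.add hB.differentiableAt).congr_of_eventuallyEq heq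
  · show fderiv ℝ (fun q => fderiv ℝ (fun q => v q + f q.2) q d) p d = _
    rw [heq.fderiv_eq, (show HasFDerivAt (fun q => fderiv ℝ v q d + f' q.2 * d.2) _ p from
      hA.hasFDerivAt.add hB).fderiv]
    show fderiv ℝ (fun q => fderiv ℝ v q d) p d + (f'' p.2 * d.2) * d.2 = _
    rfl

/-- Laplacian of `v + f ∘ snd` at interior points. -/
lemma cylLaplacian_add_slice {n : ℕ} {v : EuclideanSpace ℝ (Fin n) × ℝ → ℝ}
    {f f' f'' : ℝ → ℝ}
    (hf : ∀ t, HasDerivAt f (f' t) t) (hf' : ∀ t, HasDerivAt f' (f'' t) t)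
    {U : Set (EuclideanSpace ℝ (Fin n) × ℝ)} (hU : IsOpen U)
    (hv : ContDiffOn ℝ 2 v U)
    {p : EuclideanSpace ℝ (Fin n) × ℝ} (hp : p ∈ U) :
    cylLaplacian n (fun q => v q + f q.2) p = cylLaplacian n v p + f'' p.2 := by
  unfold cylLaplacian
  have h1 : ∀ i : Fin n,
      secondDirDeriv n (fun q => v q + f q.2) p (EuclideanSpace.single i 1, 0)
        = secondDirDeriv n v p (EuclideanSpace.single i 1, 0) := by
    intro i
    rw [(slice_add_second hf hf' hU hv hp _).2]
    norm_num
  have h2 : secondDirDeriv n (fun q => v q + f q.2) p (0, 1)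
      = secondDirDeriv n v p (0, 1) + f'' p.2 := by
    rw [(slice_add_second hf hf' hU hv hp _).2]
    norm_num
  rw [h2, Finset.sum_congr rfl (fun i _ => h1 i)]
  ring

/-- Maximum principle in an infinite half-cylinder `Ω = H × (0,∞)` over a bounded
domain `H`: a bounded harmonic function `v ∈ C²(Ω) ∩ C(closure Ω)` satisfies
`inf_Ω v = inf_{∂Ω} v`. -/
theorem stmt_9 (n : ℕ) (H : Set (EuclideanSpace ℝ (Fin n)))
    (hHopen : IsOpen H) (hHne : H.Nonempty) (hHbdd : Bornology.IsBounded H)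
    (Ω : Set (EuclideanSpace ℝ (Fin n) × ℝ))
    (hΩ : Ω = {p | p.1 ∈ H ∧ 0 < p.2})
    (v : EuclideanSpace ℝ (Fin n) × ℝ → ℝ)
    (hvC2 : ContDiffOn ℝ 2 v Ω)
    (hvcont : ContinuousOn v (closure Ω))
    (hvbdd : ∃ M : ℝ, ∀ p, |v p| ≤ M)
    (hharm : ∀ p ∈ Ω, cylLaplacian n v p = 0) :
    sInf (v '' Ω) = sInf (v '' frontier Ω) := by
  obtain ⟨M, hM⟩ := hvbdd
  obtain ⟨x₀, hx₀⟩ := hHne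
  have hM0 : 0 ≤ M := le_trans (abs_nonneg _) (hM 0)
  have hΩ' : Ω = H ×ˢ Ioi (0:ℝ) := by rw [hΩ]; rfl
  have hΩopen : IsOpen Ω := hΩ' ▸ hHopen.prod isOpen_Ioi
  have hclΩ : closure Ω = closure H ×ˢ Ici (0:ℝ) := by
    rw [hΩ', closure_prod_eq, closure_Ioi]
  have hfr : frontier Ω = closure Ω \ Ω := hΩopen.frontier_eq
  have hΩne : Ω.Nonempty := ⟨(x₀, 1), by rw [hΩ]; exact ⟨hx₀, one_pos⟩⟩
  have hfrpt : ((x₀, (0:ℝ)) : EuclideanSpace ℝ (Fin n) × ℝ) ∈ frontier Ω := by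
    rw [hfr]
    refine ⟨by rw [hclΩ]; exact ⟨subset_closure hx₀, by norm_num⟩, ?_⟩
    rw [hΩ]; exact fun h => lt_irrefl 0 h.2
  have hfrne : (frontier Ω).Nonempty := ⟨_, hfrpt⟩
  have hbdd : BddBelow (v '' Ω) :=
    ⟨-M, by rintro y ⟨p, -, rfl⟩; linarith [neg_abs_le (v p), (abs_le.mp (hM p)).1]⟩
  have hbddfr : BddBelow (v '' frontier Ω) :=
    ⟨-M, by rintro y ⟨p, -, rfl⟩; linarith [(abs_le.mp (hM p)).1]⟩
  set m := sInf (v '' frontier Ω) with hm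
  have hfrm : ∀ p ∈ frontier Ω, m ≤ v p := fun p hp => csInf_le hbddfr ⟨p, hp, rfl⟩
  have hmM : m ≤ M := le_trans (hfrm _ hfrpt) (le_of_abs_le (hM _))
  -- the key estimate via the comparison function
  have key : ∀ q ∈ Ω, m ≤ v q := by
    intro q hq
    rw [hΩ] at hq
    obtain ⟨hq1, hq2⟩ := hq
    have inner : ∀ T, q.2 < T → ∀ δ : ℝ, 0 < δ →
        m ≤ v q + 2*M*q.2/T + δ * Real.exp T := by
      intro T hT δ hδ
      have hT0 : (0:ℝ) < T := lt_trans hq2 hT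
      set a : ℝ := 2*M/T with ha
      have ha0 : 0 ≤ a := div_nonneg (by linarith) hT0.le
      set f : ℝ → ℝ := fun t => a*t - δ*Real.exp t with hfdef
      set f' : ℝ → ℝ := fun t => a - δ*Real.exp t with hf'def
      set f'' : ℝ → ℝ := fun t => -(δ*Real.exp t) with hf''def
      have hf : ∀ t, HasDerivAt f (f' t) t := fun t => by
        simpa [hf'def, hfdef, Pi.sub_def] using
          (((hasDerivAt_id t).const_mul a).sub ((Real.hasDerivAt_exp t).const_mul δ))
      have hf' : ∀ t, HasDerivAt f' (f'' t) t := fun t => by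
        simpa [hf''def, hf'def, Pi.sub_def] using
          ((hasDerivAt_const t a).sub ((Real.hasDerivAt_exp t).const_mul δ))
      set w : EuclideanSpace ℝ (Fin n) × ℝ → ℝ := fun p => v p + f p.2 with hwdef
      set ΩT : Set (EuclideanSpace ℝ (Fin n) × ℝ) := H ×ˢ Ioo 0 T with hΩT
      have hΩTopen : IsOpen ΩT := hHopen.prod isOpen_Ioo
      have hΩTsub : ΩT ⊆ Ω := by
        rw [hΩ']; exact Set.prod_mono_right Ioo_subset_Ioi_self
      have hclT : closure ΩT = closure H ×ˢ Icc 0 T := by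
        rw [hΩT, closure_prod_eq, closure_Ioo hT0.ne]
      have hKcomp : IsCompact (closure ΩT) := by
        rw [hclT]
        exact (Metric.isCompact_of_isClosed_isBounded isClosed_closure
          hHbdd.closure).prod isCompact_Icc
      have hKne : (closure ΩT).Nonempty :=
        ⟨(x₀, T/2), subset_closure ⟨hx₀, by constructor <;> linarith⟩⟩
      have hwcont : ContinuousOn w (closure ΩT) := by
        refine ((hvcont.mono (closure_mono hΩTsub)).add ?_)
        have hfc : Continuous f := by
          rw [hfdef]
          exact (continuous_const.mul continuous_id).sub
            (continuous_const.mul Real.continuous_exp)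
        exact (hfc.comp continuous_snd).continuousOn
      obtain ⟨p, hpK, hpmin⟩ := hKcomp.exists_isMinOn hKne hwcont
      have hbound : m - δ * Real.exp T ≤ w p := by
        by_cases hpΩT : p ∈ ΩT
        · exfalso
          have hploc : IsLocalMin w p := hpmin.isLocalMin
            (Filter.mem_of_superset (hΩTopen.mem_nhds hpΩT) subset_closure)
          have hpΩ : p ∈ Ω := hΩTsub hpΩT
          have hdiffw : ∀ r ∈ Ω, DifferentiableAt ℝ w r := fun r hr =>
            ((hvC2.contDiffAt (hΩopen.mem_nhds hr)).differentiableAt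
              (by norm_num)).add (slice_hasFDerivAt hf r).differentiableAt
          have hnn : 0 ≤ cylLaplacian n w p := by
            unfold cylLaplacian
            refine add_nonneg (Finset.sum_nonneg fun i _ => ?_) ?_
            · exact secondDirDeriv_nonneg_of_isLocalMin hΩopen hpΩ hdiffw _
                (slice_add_second hf hf' hΩopen hvC2 hpΩ _).1 hploc
            · exact secondDirDeriv_nonneg_of_isLocalMin hΩopen hpΩ hdiffw _
                (slice_add_second hf hf' hΩopen hvC2 hpΩ _).1 hploc
          have hneg : cylLaplacian n w p = -(δ*Real.exp p.2) := by
            rw [show w = fun q => v q + f q.2 from hwdef]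
            rw [cylLaplacian_add_slice hf hf' hΩopen hvC2 hpΩ, hharm p hpΩ]
            simp [hf''def]
          rw [hneg] at hnn
          nlinarith [Real.exp_pos p.2]
        · have hpmem : p ∈ closure H ×ˢ Icc 0 T := hclT ▸ hpK
          have hp2 : p.2 ∈ Icc (0:ℝ) T := hpmem.2
          have hexp : Real.exp p.2 ≤ Real.exp T := Real.exp_le_exp.mpr hp2.2
          by_cases hpT : p.2 = T
          · have haT : a * T = 2*M := by rw [ha, div_mul_cancel₀ _ hT0.ne']
            have hvp : -M ≤ v p := (abs_le.mp (hM p)).1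
            have : w p = v p + a * T - δ * Real.exp T := by
              simp only [hwdef, hfdef, hpT]; ring
            rw [this, haT]
            linarith
          · have hp2T : p.2 < T := lt_of_le_of_ne hp2.2 hpT
            have hpfr : p ∈ frontier Ω := by
              rw [hfr]
              refine ⟨by rw [hclΩ]; exact ⟨hpmem.1, hp2.1⟩, fun hpΩ' => ?_⟩
              rw [hΩ] at hpΩ'
              exact hpΩT ⟨hpΩ'.1, hpΩ'.2, hp2T⟩
            have h1 : m ≤ v p := hfrm p hpfr
            have h2 : 0 ≤ a * p.2 := mul_nonneg ha0 hp2.1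
            have h3 : δ * Real.exp p.2 ≤ δ * Real.exp T := by nlinarith
            simp only [hwdef, hfdef]
            linarith
      have hqK : q ∈ closure ΩT := subset_closure ⟨hq1, hq2, hT⟩
      have hwq : w p ≤ w q := isMinOn_iff.mp hpmin q hqK
      have haq : a * q.2 = 2*M*q.2/T := by rw [ha]; ring
      have hexpq : 0 < Real.exp q.2 := Real.exp_pos _
      simp only [hwdef, hfdef] at hwq hbound
      nlinarith [mul_pos hδ hexpq, le_trans hbound hwq]
    refine le_of_forall_pos_le_add ?_
    intro ε hε
    set T : ℝ := (q.2 + 1) + 4*M*q.2/ε with hTdef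
    have hTd : 0 ≤ 4*M*q.2/ε := by positivity
    have hT : q.2 < T := by rw [hTdef]; linarith
    have hT0 : 0 < T := lt_trans hq2 hT
    have h2 : 2*M*q.2/T ≤ ε/2 := by
      rw [div_le_iff₀ hT0, hTdef]
      have he : ε/2 * (4*M*q.2/ε) = 2*M*q.2 := by
        field_simp; ring
      nlinarith [mul_pos (half_pos hε) (show (0:ℝ) < q.2 + 1 by linarith)]
    have hδ : (0:ℝ) < ε/(2*Real.exp T) := by positivity
    have hkey := inner T hT _ hδ
    have hδT : (ε/(2*Real.exp T)) * Real.exp T = ε/2 := by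
      field_simp
    rw [hδT] at hkey
    linarith
  -- conclusion
  apply le_antisymm
  · refine le_csInf (hfrne.image v) ?_
    rintro b ⟨p, hp, rfl⟩
    have hpcl : p ∈ closure Ω := (hfr ▸ hp).1
    have hmem : v p ∈ closure (v '' Ω) := hvcont.image_closure ⟨p, hpcl, rfl⟩
    have hlb : closure (v '' Ω) ⊆ Ici (sInf (v '' Ω)) :=
      closure_minimal (fun y hy => csInf_le hbdd hy) isClosed_Ici
    exact hlb hmem
  · exact le_csInf (hΩne.image v) (by rintro b ⟨q, hq, rfl⟩; exact key q hq)
end
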